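/- arXiv:math/0207168 — 3 statements merged into one kernel-verified Lean document; each statement's English description precedes it below -/
import Mathlib

section
/- Let C_∞{t} denote the subring of C_∞[[t]] consisting of power series Σ a_n t^n with |a_n|_∞ → 0 (i.e., convergent on the closed unit disc |t|_∞ ≤ 1). Suppose Φ ∈ Mat_{ℓ×ℓ}(k̄[t]) satisfies det Φ(0) ≠ 0 and ψ ∈ Mat_{ℓ×1}(C_∞{t}) satisfies ψ^(-1) = Φψ. Then all entries of ψ lie in E. -/
noncomputable section
open scoped Classical
set_option synthInstance.maxHeartbeats 1000000
set_option maxHeartbeats 1000000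

variable (Fq : Type) [Field Fq] [Fintype Fq]
variable (C : Type) [NormedField C] [CompleteSpace C] [IsAlgClosed C]
  [Algebra (RatFunc Fq) C]

/-- The natural map `A = Fq[T] → C_∞`. -/
def thetaP : Polynomial Fq →+* C :=
  (algebraMap (RatFunc Fq) C).comp (algebraMap (Polynomial Fq) (RatFunc Fq))

/-- The image of `T` in `C_∞`. -/
def Tc : C := thetaP Fq C Polynomial.X

/-- The image of `k = Fq(T)` in `C_∞`. -/
def kSub : Subfield C := (algebraMap (RatFunc Fq) C).fieldRange

/-- `k_∞ = Fq((1/T))`: the closure of `k` in `C_∞`. -/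
def Kinf : Subfield C := (kSub Fq C).topologicalClosure

/-- Membership in the ring `E ⊆ k̄[[t]]`: all coefficients are algebraic over `k`,
`|a_n|^{1/n} → 0` (infinite radius of convergence), and the coefficients generate a
finite extension of `k_∞`. -/
def memE (f : PowerSeries C) : Prop :=
  (∀ n : ℕ, IsAlgebraic (RatFunc Fq) (PowerSeries.coeff n f)) ∧
  Filter.Tendsto (fun n : ℕ => ‖PowerSeries.coeff n f‖ ^ (1 / (n : ℝ)))
    Filter.atTop (nhds 0) ∧
  FiniteDimensional ↥(Kinf Fq C)
    ↥(IntermediateField.adjoin ↥(Kinf Fq C)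
        (Set.range fun n : ℕ => PowerSeries.coeff n f))

/-- The inverse of the `q`-power (Frobenius) map of `C_∞`. -/
def qInv (x : C) : C := Function.invFun (fun y : C => y ^ Fintype.card Fq) x

/-- The inverse twist `f ↦ f^{(-1)}` on power series (coefficientwise `q`-th root). -/
def twistNegPS (f : PowerSeries C) : PowerSeries C :=
  PowerSeries.mk fun n => qInv Fq C (PowerSeries.coeff n f)

/-- Evaluation of an entire power series at a point of `C_∞`. -/
def psEval (f : PowerSeries C) (x : C) : C := ∑' n : ℕ, PowerSeries.coeff n f * x ^ n

section auxlemmas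
open Pointwise

open Filter in
lemma auxKtend (n₀ D : ℕ) (hD : 1 ≤ D) :
    Tendsto (fun n : ℕ => (n - n₀) / D) atTop atTop := by
  refine tendsto_atTop_atTop.mpr fun b => ⟨n₀ + b * D, fun n hn => ?_⟩
  have h1 : b * D ≤ n - n₀ := by omega
  exact (Nat.le_div_iff_mul_le hD).mpr h1

open Filter in
lemma auxExpLin (A E : ℝ) : ∀ᶠ k : ℕ in atTop, A + E * k ≤ 2 ^ k + 1 := by
  have h1 : Tendsto (fun k : ℕ => A * (1/2 : ℝ) ^ k + E * (k * (1/2 : ℝ) ^ k)) atTop (nhds 0) := by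
    have := (tendsto_pow_atTop_nhds_zero_of_lt_one (by norm_num : (0:ℝ) ≤ 1/2)
      (by norm_num : (1/2:ℝ) < 1)).const_mul A
    have h2 := (tendsto_self_mul_const_pow_of_lt_one (by norm_num : (0:ℝ) ≤ 1/2)
      (by norm_num : (1/2:ℝ) < 1)).const_mul E
    simpa using this.add h2
  filter_upwards [h1.eventually (eventually_le_nhds (by norm_num : (0:ℝ) < 1))] with k hk
  have hpow : (0:ℝ) < 2 ^ k := by positivity
  have h2 : ((1:ℝ)/2) ^ k = ((2:ℝ)^k)⁻¹ := by
    rw [one_div, inv_pow]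
  rw [h2] at hk
  have : (A + E * k) * ((2:ℝ)^k)⁻¹ ≤ 1 := by ring_nf at hk ⊢; linarith
  have := (div_le_one hpow).mp (by rw [div_eq_mul_inv]; exact this)
  linarith

open Filter in
lemma auxB (c : ℕ → ℝ) (h0 : ∀ n, 0 ≤ c n) (B : ℝ) (hB : 1 ≤ B) (D : ℕ) (hD : 1 ≤ D)
    (q : ℕ) (hq : 2 ≤ q)
    (hrec : ∀ n : ℕ, ∃ m, n - D ≤ m ∧ m ≤ n ∧ c n ≤ B * c m ^ q)
    (hlim : Tendsto c atTop (nhds 0)) :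
    Tendsto (fun n : ℕ => c n ^ (1 / (n : ℝ))) atTop (nhds 0) := by
  have hB0 : (0:ℝ) < B := lt_of_lt_of_le one_pos hB
  set δ : ℝ := min (1/2) (1/B) with hδdef
  have hδ0 : 0 < δ := lt_min (by norm_num) (by positivity)
  have hδ1 : δ < 1 := lt_of_le_of_lt (min_le_left _ _) (by norm_num)
  have hBδ : B * δ ≤ 1 := by
    have : δ ≤ 1/B := min_le_right _ _
    calc B * δ ≤ B * (1/B) := by nlinarith
    _ = 1 := by field_simp
  have hδ2 : (0:ℝ) < δ ^ 2 := by positivity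
  obtain ⟨n₀, hn₀⟩ : ∃ n₀, ∀ m ≥ n₀, c m ≤ δ ^ 2 := by
    have := hlim.eventually (eventually_le_nhds hδ2)
    exact eventually_atTop.mp this
  -- main claim
  have key : ∀ k, ∀ n, n₀ + k * D ≤ n → c n ≤ δ ^ (2 ^ k + 1) := by
    intro k
    induction k with
    | zero => intro n hn; simpa using hn₀ n (by omega)
    | succ k ih =>
      intro n hn
      obtain ⟨m, hm1, hm2, hc⟩ := hrec n
      have hmk : n₀ + k * D ≤ m := by
        have h : n₀ + (k+1) * D ≤ n := hn
        have h2 : (k+1) * D = k * D + D := by ring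
        omega
      have hcm := ih m hmk
      have hδpow1 : (0:ℝ) ≤ δ ^ (2 ^ k + 1) := by positivity
      have hδle1 : δ ^ (2 ^ k + 1) ≤ 1 := pow_le_one₀ hδ0.le hδ1.le
      calc c n ≤ B * c m ^ q := hc
        _ ≤ B * (δ ^ (2 ^ k + 1)) ^ q := by
            have := pow_le_pow_left₀ (h0 m) hcm q
            nlinarith
        _ ≤ B * (δ ^ (2 ^ k + 1)) ^ 2 := by
            have := pow_le_pow_of_le_one (by positivity) hδle1 hq
            nlinarith
        _ = B * δ * δ ^ (2 ^ (k+1) + 1) := by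
            rw [← pow_mul]
            have : (2 ^ k + 1) * 2 = (2 ^ (k+1) + 1) + 1 := by ring
            rw [this, pow_succ]
            ring
        _ ≤ 1 * δ ^ (2 ^ (k+1) + 1) := by
            have : (0:ℝ) ≤ δ ^ (2 ^ (k+1) + 1) := by positivity
            nlinarith
        _ = δ ^ (2 ^ (k+1) + 1) := one_mul _
  -- convert to tendsto
  have hub : ∀ᶠ n : ℕ in atTop,
      c n ^ (1 / (n:ℝ)) ≤ δ ^ (((2 ^ ((n - n₀)/D) + 1 : ℕ) : ℝ) * (1 / (n:ℝ))) := by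
    filter_upwards [eventually_ge_atTop (n₀ + 1)] with n hn
    set k := (n - n₀) / D with hk
    have hkn : n₀ + k * D ≤ n := by
      have h := Nat.div_mul_le_self (n - n₀) D
      rw [← hk] at h
      omega
    have hcn := key k n hkn
    have h1 : c n ^ (1 / (n:ℝ)) ≤ (δ ^ (2 ^ k + 1)) ^ (1 / (n:ℝ)) :=
      Real.rpow_le_rpow (h0 n) hcn (by positivity)
    calc c n ^ (1 / (n:ℝ)) ≤ (δ ^ (2 ^ k + 1)) ^ (1 / (n:ℝ)) := h1
      _ = δ ^ (((2 ^ k + 1 : ℕ) : ℝ) * (1 / (n:ℝ))) := by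
          rw [← Real.rpow_natCast δ (2 ^ k + 1), ← Real.rpow_mul hδ0.le]
  have hexp : Tendsto (fun n : ℕ => ((2 ^ ((n - n₀)/D) + 1 : ℕ) : ℝ) * (1 / (n:ℝ)))
      atTop atTop := by
    rw [tendsto_atTop]
    intro b
    set M := max b 1 with hM
    have hM0 : (0:ℝ) < M := lt_of_lt_of_le one_pos (le_max_right _ _)
    have hev : ∀ᶠ k : ℕ in atTop, M * (n₀ + D) + (M * D) * k ≤ 2 ^ k + 1 :=
      auxExpLin _ _
    have hktend := auxKtend n₀ D hD
    filter_upwards [hktend.eventually hev, eventually_ge_atTop (n₀ + 1)] with n hkev hn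
    set k := (n - n₀) / D with hk
    have hnk : n ≤ n₀ + (k + 1) * D := by
      have h := Nat.div_add_mod (n - n₀) D
      have h2 : (n - n₀) % D < D := Nat.mod_lt _ (by omega)
      rw [← hk] at h
      have h3 : (k + 1) * D = D * k + D := by ring
      omega
    have hn1 : (1:ℝ) ≤ (n:ℝ) := by exact_mod_cast Nat.one_le_iff_ne_zero.mpr (by omega)
    have hnpos : (0:ℝ) < n := by linarith
    have h2 : M * (n:ℝ) ≤ ((2 ^ k + 1 : ℕ) : ℝ) := by
      have hcast : (n:ℝ) ≤ (n₀:ℝ) + ((k:ℝ) + 1) * D := by exact_mod_cast hnk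
      have : M * (n:ℝ) ≤ M * ((n₀:ℝ) + ((k:ℝ)+1) * D) := by nlinarith
      have h3 : M * ((n₀:ℝ) + ((k:ℝ)+1) * D) = M * (n₀ + D) + (M * D) * k := by
        push_cast; ring
      push_cast
      push_cast at hkev
      nlinarith
    have : b ≤ M := le_max_left _ _
    calc b ≤ M := this
      _ = M * (n:ℝ) * (1 / n) := by field_simp
      _ ≤ ((2 ^ k + 1 : ℕ) : ℝ) * (1 / n) := by
          have h1n : (0:ℝ) ≤ 1 / n := by positivity
          nlinarith
  have hδtend := (tendsto_rpow_atTop_of_base_lt_one δ (by linarith) hδ1).comp hexp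
  refine tendsto_of_tendsto_of_tendsto_of_le_of_le' tendsto_const_nhds hδtend ?_ hub
  · filter_upwards with n; exact Real.rpow_nonneg (h0 n) _


lemma aux_nonarch {C : Type*} [NormedField C]
    (hna : ∀ x y : C, ‖x + y‖ ≤ max ‖x‖ ‖y‖) {α : Type*} (s : Finset α) (f : α → C)
    {B : ℝ} (hB : 0 ≤ B) (h : ∀ i ∈ s, ‖f i‖ ≤ B) : ‖∑ i ∈ s, f i‖ ≤ B := by
  classical
  induction s using Finset.induction_on with
  | empty => simpa using hB
  | @insert a s hnotmem ih =>
    rw [Finset.sum_insert hnotmem]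
    refine le_trans (hna _ _) (max_le (h a (Finset.mem_insert_self a s)) ?_)
    exact ih fun i hi => h i (Finset.mem_insert_of_mem hi)

lemma auxA {K CC : Type*} [Field K] [CommRing CC] [Algebra K CC] {ℓ q : ℕ} (hq : 2 ≤ q)
    (x : Fin ℓ → CC)
    (h : ∀ i, x i ^ q ∈ Submodule.span K (insert (1:CC) (Set.range x))) :
    ∀ i, IsIntegral K (x i) := by
  classical
  set T : Set CC := Set.range (fun e : Fin ℓ → Fin q => ∏ i, x i ^ (e i : ℕ)) with hT
  set V : Submodule K CC := Submodule.span K T with hV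
  have key : ∀ N (e : Fin ℓ → ℕ), (∑ i, e i) ≤ N → (∏ i, x i ^ e i) ∈ V := by
    intro N
    induction N using Nat.strong_induction_on with
    | _ N ih =>
      intro e he
      by_cases hcase : ∀ i, e i < q
      · refine Submodule.subset_span ⟨fun i => ⟨e i, hcase i⟩, ?_⟩
        rfl
      · push_neg at hcase
        obtain ⟨j, hj⟩ := hcase
        have hN : q ≤ N := le_trans hj (le_trans (Finset.single_le_sum
          (f := e) (fun i _ => Nat.zero_le _) (Finset.mem_univ j)) he)
        set e' : Fin ℓ → ℕ := Function.update e j (e j - q) with he'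
        have hsum' : (∑ i, e' i) = (∑ i, e i) - q := by
          rw [he', Finset.sum_update_of_mem (Finset.mem_univ j)]
          have h2 : ∑ i, e i = e j + ∑ i ∈ Finset.univ \ {j}, e i := by
            rw [Finset.sum_eq_add_sum_sdiff_singleton_of_mem (Finset.mem_univ j)]
          omega
        have hfact : (∏ i, x i ^ e i) = x j ^ q * ∏ i, x i ^ e' i := by
          have h1 : ∀ i, x i ^ e i = (if i = j then x j ^ q else 1) * x i ^ e' i := by
            intro i
            by_cases hij : i = j
            · subst hij
              rw [if_pos rfl, he', Function.update_self, ← pow_add]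
              congr 1; omega
            · rw [if_neg hij, he', Function.update_of_ne hij, one_mul]
          rw [Finset.prod_congr rfl (fun i _ => h1 i), Finset.prod_mul_distrib,
            Finset.prod_ite_eq' Finset.univ j (fun i => x j ^ q), if_pos (Finset.mem_univ j)]
        rw [hfact]
        -- x j ^ q * m' ∈ V
        have hmap : x j ^ q * (∏ i, x i ^ e' i) ∈
            (Submodule.span K (insert (1:CC) (Set.range x))).map
              (LinearMap.mulRight K (∏ i, x i ^ e' i)) :=
          ⟨x j ^ q, h j, rfl⟩
        rw [Submodule.map_span] at hmap
        refine Submodule.span_le.mpr ?_ hmap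
        rintro z ⟨w, hw, rfl⟩
        rcases Set.mem_insert_iff.mp hw with h1 | ⟨k, rfl⟩
        · subst h1
          simp only [LinearMap.mulRight_apply, one_mul]
          exact ih (N - 1) (by omega) e' (by omega)
        · simp only [LinearMap.mulRight_apply]
          set e'' : Fin ℓ → ℕ := fun i => e' i + (if i = k then 1 else 0) with he''
          have hfact2 : x k * (∏ i, x i ^ e' i) = ∏ i, x i ^ e'' i := by
            have h1 : ∀ i, x i ^ e'' i = x i ^ e' i * (if i = k then x i else 1) := by
              intro i
              show x i ^ (e' i + if i = k then 1 else 0) = _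
              by_cases hik : i = k
              · subst hik; simp [pow_add]
              · simp [hik]
            rw [Finset.prod_congr rfl (fun i _ => h1 i), Finset.prod_mul_distrib,
              Finset.prod_ite_eq' Finset.univ k (fun i => x i), if_pos (Finset.mem_univ k)]
            ring
          rw [hfact2]
          have hsum'' : (∑ i, e'' i) = (∑ i, e' i) + 1 := by
            show (∑ i, (e' i + if i = k then 1 else 0)) = _
            rw [ Finset.sum_add_distrib, Finset.sum_ite_eq' Finset.univ k (fun _ => 1),
              if_pos (Finset.mem_univ k)]
          exact ih (N - 1) (by omega) e'' (by omega)
  have hone : (1:CC) ∈ V := by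
    have := key 0 (fun _ => 0) (by simp)
    simpa using this
  have hxmem : ∀ i, x i ∈ V := by
    intro i
    have h1 : (∏ i', x i' ^ (if i' = i then 1 else 0)) = x i := by
      rw [Finset.prod_congr rfl (fun i' _ =>
        show x i' ^ (if i' = i then 1 else 0) = (if i' = i then x i' else 1) by
          by_cases h : i' = i <;> simp [h]),
        Finset.prod_ite_eq' Finset.univ i (fun i' => x i'), if_pos (Finset.mem_univ i)]
    have := key 1 (fun i' => if i' = i then 1 else 0)
      (by rw [Finset.sum_ite_eq' Finset.univ i (fun _ => 1), if_pos (Finset.mem_univ i)])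
    rwa [h1] at this
  have hmul : ∀ a b : CC, a ∈ V → b ∈ V → a * b ∈ V := by
    have hTT : Submodule.span K (T * T) ≤ V := by
      refine Submodule.span_le.mpr ?_
      rintro z ⟨t1, ht1, t2, ht2, rfl⟩
      obtain ⟨a, rfl⟩ := ht1
      obtain ⟨b, rfl⟩ := ht2
      show (∏ i, x i ^ (a i : ℕ)) * (∏ i, x i ^ (b i : ℕ)) ∈ (V : Set CC)
      have : (∏ i, x i ^ (a i : ℕ)) * (∏ i, x i ^ (b i : ℕ)) =
          ∏ i, x i ^ ((a i : ℕ) + (b i : ℕ)) := by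
        rw [← Finset.prod_mul_distrib]
        exact Finset.prod_congr rfl fun i _ => (pow_add _ _ _).symm
      rw [this]
      exact key _ _ le_rfl
    intro a b ha hb
    have h2 := Submodule.mul_mem_mul (M := V) (N := V) ha hb
    rw [hV, Submodule.span_mul_span] at h2
    exact hTT h2
  set S : Subalgebra K CC := Submodule.toSubalgebra V hone hmul with hS
  have hfg : (Subalgebra.toSubmodule S).FG := Submodule.fg_span (Set.finite_range _)
  exact fun i => IsIntegral.of_mem_of_fg S hfg (x i) (hxmem i)

end auxlemmas

open Filter in
theorem statement4
    (hna : ∀ x y : C, ‖x + y‖ ≤ max ‖x‖ ‖y‖)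
    (hT : ‖Tc Fq C‖ = (Fintype.card Fq : ℝ))
    (ℓ : ℕ)
    (Φ : Matrix (Fin ℓ) (Fin ℓ) (Polynomial C))
    (hΦalg : ∀ i j n, IsAlgebraic (RatFunc Fq) ((Φ i j).coeff n))
    (hdet : Polynomial.eval 0 Φ.det ≠ 0)
    (ψ : Fin ℓ → PowerSeries C)
    (hψ : ∀ i, Filter.Tendsto (fun n : ℕ => ‖PowerSeries.coeff n (ψ i)‖)
      Filter.atTop (nhds 0))
    (hfe : ∀ i, twistNegPS Fq C (ψ i) = ∑ j, (Φ i j : PowerSeries C) * ψ j) :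
    ∀ i, memE Fq C (ψ i) := by
  rcases Nat.eq_zero_or_pos ℓ with hℓ | hℓpos
  · subst hℓ; exact fun i => i.elim0
  have huniv : (Finset.univ : Finset (Fin ℓ)).Nonempty := ⟨⟨0, hℓpos⟩, Finset.mem_univ _⟩
  -- characteristic setup
  set q := Fintype.card Fq with hqdef
  set p := ringChar Fq with hpdef
  haveI hFqchar : CharP Fq p := ringChar.charP Fq
  obtain ⟨m, hp, hqpm⟩ := FiniteField.card Fq p
  haveI hpfact : Fact p.Prime := ⟨hp⟩
  haveI hCchar : CharP C p := charP_of_injective_ringHom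
    (f := (thetaP Fq C).comp Polynomial.C) (RingHom.injective _) p
  set frobq : C →+* C := iterateFrobenius C p m with hfrobdef
  have hfrob : ∀ x : C, frobq x = x ^ q := fun x => by
    rw [hfrobdef, iterateFrobenius_def, ← hqpm]
  have hq2 : 2 ≤ q := Fintype.one_lt_card
  have hq0 : 0 < q := by omega
  have hqInv : ∀ x : C, (qInv Fq C x) ^ q = x := by
    intro x
    obtain ⟨z, hz⟩ := IsAlgClosed.exists_pow_nat_eq x hq0
    exact Function.invFun_eq ⟨z, hz⟩
  set a : ℕ → Fin ℓ → C := fun n i => PowerSeries.coeff n (ψ i) with ha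
  -- master identity
  have hstar : ∀ n i, a n i =
      ∑ j, ∑ uv ∈ Finset.HasAntidiagonal.antidiagonal n, ((Φ i j).coeff uv.1) ^ q * (a uv.2 j) ^ q := by
    intro n i
    have h1 := congrArg (PowerSeries.coeff n) (hfe i)
    rw [map_sum] at h1
    have h2 : PowerSeries.coeff n (twistNegPS Fq C (ψ i)) = qInv Fq C (a n i) := by
      rw [twistNegPS, PowerSeries.coeff_mk]
    rw [h2] at h1
    have h3 := congrArg frobq h1
    rw [hfrob, hqInv] at h3
    rw [h3, map_sum]
    refine Finset.sum_congr rfl fun j _ => ?_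
    rw [PowerSeries.coeff_mul, map_sum]
    refine Finset.sum_congr rfl fun uv _ => ?_
    rw [map_mul, hfrob, hfrob, Polynomial.coeff_coe]
  -- degree/coefficient bounds
  set d : ℕ := Finset.univ.sup (fun ij : Fin ℓ × Fin ℓ => (Φ ij.1 ij.2).natDegree) with hd
  have hcoeffzero : ∀ i j u, d < u → (Φ i j).coeff u = 0 := by
    intro i j u hu
    refine Polynomial.coeff_eq_zero_of_natDegree_lt (lt_of_le_of_lt ?_ hu)
    exact Finset.le_sup (f := fun ij : Fin ℓ × Fin ℓ => (Φ ij.1 ij.2).natDegree)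
      (Finset.mem_univ (i, j))
  haveI : NeZero ℓ := ⟨by omega⟩
  set Cr : ℝ := Finset.univ.sup' Finset.univ_nonempty
    (fun x : Fin ℓ × Fin ℓ × Fin (d+1) => ‖(Φ x.1 x.2.1).coeff (x.2.2 : ℕ)‖) with hCr
  have hCr0 : 0 ≤ Cr := by
    refine le_trans (norm_nonneg ((Φ ⟨0, hℓpos⟩ ⟨0, hℓpos⟩).coeff ((0 : Fin (d+1)) : ℕ))) ?_
    exact Finset.le_sup' (f := fun x : Fin ℓ × Fin ℓ × Fin (d+1) =>
      ‖(Φ x.1 x.2.1).coeff (x.2.2 : ℕ)‖) (Finset.mem_univ (⟨0, hℓpos⟩, ⟨0, hℓpos⟩, 0))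
  have hcoeffbound : ∀ i j u, ‖(Φ i j).coeff u‖ ≤ 1 + Cr := by
    intro i j u
    rcases le_or_gt u d with hu | hu
    · refine le_trans (Finset.le_sup' (f := fun x : Fin ℓ × Fin ℓ × Fin (d+1) =>
        ‖(Φ x.1 x.2.1).coeff (x.2.2 : ℕ)‖) (b := (i, j, ⟨u, by omega⟩))
        (Finset.mem_univ _)) (by linarith)
    · rw [hcoeffzero i j u hu, norm_zero]; linarith
  -- the sequence of sup-norms of coefficients
  set c : ℕ → ℝ := fun n => Finset.univ.sup' huniv fun i => ‖a n i‖ with hc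
  have hc0 : ∀ n, 0 ≤ c n := fun n =>
    le_trans (norm_nonneg (a n ⟨0, hℓpos⟩))
      (Finset.le_sup' (fun i => ‖a n i‖) (Finset.mem_univ ⟨0, hℓpos⟩))
  have hcle : ∀ n i, ‖a n i‖ ≤ c n := fun n i =>
    Finset.le_sup' (fun i => ‖a n i‖) (Finset.mem_univ i)
  have hctend : Tendsto c atTop (nhds 0) := by
    have hsum : Tendsto (fun n => ∑ i, ‖a n i‖) atTop (nhds 0) := by
      have := tendsto_finset_sum (Finset.univ : Finset (Fin ℓ)) (fun i _ => hψ i)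
      simpa using this
    refine tendsto_of_tendsto_of_tendsto_of_le_of_le tendsto_const_nhds hsum hc0 ?_
    intro n
    refine Finset.sup'_le _ _ fun i _ => ?_
    exact Finset.single_le_sum (fun i _ => norm_nonneg _) (Finset.mem_univ i)
  set B : ℝ := (1 + Cr) ^ q with hB
  have hB1 : 1 ≤ B := one_le_pow₀ (by linarith)
  have hrec : ∀ n : ℕ, ∃ mm, n - (d+1) ≤ mm ∧ mm ≤ n ∧ c n ≤ B * c mm ^ q := by
    intro n
    have hIcc : n ∈ Finset.Icc (n - d) n := by simp [Nat.sub_le]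
    obtain ⟨w, hw, hwmax⟩ := Finset.exists_mem_eq_sup' ⟨n, hIcc⟩ c
    have hbound : (0:ℝ) ≤ B * c w ^ q := mul_nonneg (by linarith) (pow_nonneg (hc0 w) q)
    refine ⟨w, ?_, ?_, ?_⟩
    · have := (Finset.mem_Icc.mp hw).1; omega
    · exact (Finset.mem_Icc.mp hw).2
    have hmain : ∀ i, ‖a n i‖ ≤ B * c w ^ q := by
      intro i
      rw [hstar n i]
      refine aux_nonarch hna _ _ hbound fun j _ => ?_
      refine aux_nonarch hna _ _ hbound fun uv huv => ?_
      rw [norm_mul, norm_pow, norm_pow]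
      rcases le_or_gt uv.1 d with hu | hu
      · have hv : uv.2 ∈ Finset.Icc (n - d) n := by
          have := Finset.HasAntidiagonal.mem_antidiagonal.mp huv
          rw [Finset.mem_Icc]
          omega
        have h1 : ‖(Φ i j).coeff uv.1‖ ≤ 1 + Cr := hcoeffbound _ _ _
        have h2 : ‖a uv.2 j‖ ≤ c w :=
          le_trans (hcle _ _) (hwmax ▸ Finset.le_sup' c hv)
        have h1' := pow_le_pow_left₀ (norm_nonneg ((Φ i j).coeff uv.1)) h1 q
        have h2' := pow_le_pow_left₀ (norm_nonneg (a uv.2 j)) h2 q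
        calc ‖(Φ i j).coeff uv.1‖ ^ q * ‖a uv.2 j‖ ^ q
            ≤ (1+Cr)^q * c w ^ q := by
              nlinarith [pow_nonneg (norm_nonneg ((Φ i j).coeff uv.1)) q,
                pow_nonneg (norm_nonneg (a uv.2 j)) q, pow_nonneg (hc0 w) q]
          _ = B * c w ^ q := rfl
      · rw [hcoeffzero i j uv.1 hu, norm_zero, zero_pow (by omega), zero_mul]
        exact hbound
    exact Finset.sup'_le _ _ fun i _ => hmain i
  have part2 : ∀ i, Tendsto (fun n : ℕ => ‖a n i‖ ^ (1 / (n : ℝ))) atTop (nhds 0) := by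
    intro i
    have hcB := auxB c hc0 B hB1 (d+1) (by omega) q hq2 hrec hctend
    refine tendsto_of_tendsto_of_tendsto_of_le_of_le' tendsto_const_nhds hcB ?_ ?_
    · filter_upwards with n; exact Real.rpow_nonneg (norm_nonneg _) _
    · filter_upwards with n
      exact Real.rpow_le_rpow (norm_nonneg _) (hcle n i) (by positivity)
  -- rearranged identity: a n = M * (a n)^[q] + bb n
  set M : Matrix (Fin ℓ) (Fin ℓ) C := Matrix.of fun i j => ((Φ i j).coeff 0) ^ q with hM
  set bb : ℕ → Fin ℓ → C := fun n i => ∑ j, ∑ uv ∈ (Finset.HasAntidiagonal.antidiagonal n).erase (0, n),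
      ((Φ i j).coeff uv.1) ^ q * (a uv.2 j) ^ q with hbb
  have h0n : ∀ n : ℕ, ((0:ℕ), n) ∈ Finset.HasAntidiagonal.antidiagonal n := fun n => by simp
  have hsplit : ∀ n i, a n i = (∑ j, M i j * (a n j) ^ q) + bb n i := by
    intro n i
    rw [hstar n i, hbb, ← Finset.sum_add_distrib]
    refine Finset.sum_congr rfl fun j _ => ?_
    rw [← Finset.add_sum_erase _ _ (h0n n)]
    rfl
  have hΦ0det : (Matrix.of fun i j => (Φ i j).coeff 0).det ≠ 0 := by
    have h2 := RingHom.map_det (Polynomial.evalRingHom (0:C)) Φ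
    have h3 : (Polynomial.evalRingHom (0:C)).mapMatrix Φ = Matrix.of fun i j => (Φ i j).coeff 0 := by
      ext i j
      simp [RingHom.mapMatrix_apply, Matrix.map_apply, Polynomial.coeff_zero_eq_eval_zero]
    intro h0
    apply hdet
    show Polynomial.eval 0 Φ.det = 0
    rw [show Polynomial.eval (0:C) Φ.det = Polynomial.evalRingHom 0 Φ.det from rfl, h2, h3, h0]
  have hMdet : M.det ≠ 0 := by
    have h1 : M = frobq.mapMatrix (Matrix.of fun i j => (Φ i j).coeff 0) := by
      ext i j
      simp [hM, RingHom.mapMatrix_apply, Matrix.map_apply, hfrob]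
    rw [h1, ← RingHom.map_det]
    intro h0
    exact hΦ0det (frobq.injective (h0.trans (map_zero frobq).symm))
  have part1 : ∀ n, ∀ i, IsAlgebraic (RatFunc Fq) (a n i) := by
    intro n
    induction n using Nat.strong_induction_on with
    | _ n ih =>
    set S : Set C := (Set.range fun x : Fin ℓ × Fin ℓ × ℕ => (Φ x.1 x.2.1).coeff x.2.2) ∪
      (Set.range fun x : {v : ℕ // v < n} × Fin ℓ => a x.1.1 x.2) with hS
    have hSint : ∀ x ∈ S, IsIntegral (RatFunc Fq) x := by
      rintro x (⟨⟨i, j, u⟩, rfl⟩ | ⟨⟨⟨v, hv⟩, j⟩, rfl⟩)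
      · exact isAlgebraic_iff_isIntegral.mp (hΦalg i j u)
      · exact isAlgebraic_iff_isIntegral.mp (ih v hv j)
    set K' : IntermediateField (RatFunc Fq) C := IntermediateField.adjoin (RatFunc Fq) S
      with hK'
    have hΦmem : ∀ i j u, (Φ i j).coeff u ∈ K' :=
      fun i j u => IntermediateField.subset_adjoin _ _ (Or.inl ⟨(i, j, u), rfl⟩)
    have hamem : ∀ v, v < n → ∀ j, a v j ∈ K' :=
      fun v hv j => IntermediateField.subset_adjoin _ _ (Or.inr ⟨(⟨v, hv⟩, j), rfl⟩)
    have hMmem : ∀ i j, M i j ∈ K' := fun i j => pow_mem (hΦmem i j 0) q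
    have hbbmem : ∀ i, bb n i ∈ K' := by
      intro i
      refine sum_mem fun j _ => sum_mem fun uv huv => ?_
      have h1 := Finset.HasAntidiagonal.mem_antidiagonal.mp (Finset.mem_of_mem_erase huv)
      have h2 := Finset.ne_of_mem_erase huv
      have hv : uv.2 < n := by
        rcases Nat.eq_zero_or_pos uv.1 with h3 | h3
        · exfalso; apply h2
          have : uv = (uv.1, uv.2) := rfl
          rw [this, h3]
          simp at h1 ⊢
          omega
        · omega
      exact mul_mem (pow_mem (hΦmem i j uv.1) q) (pow_mem (hamem uv.2 hv j) q)
    have hdet_mem : ∀ (N : Matrix (Fin ℓ) (Fin ℓ) C), (∀ i j, N i j ∈ K') → N.det ∈ K' := by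
      intro N hN
      rw [Matrix.det_apply']
      exact sum_mem fun σ _ => mul_mem (IntermediateField.intCast_mem K' _)
        (prod_mem fun i _ => hN _ _)
    have hadjmem : ∀ j k, Matrix.adjugate M j k ∈ K' := by
      intro j k
      rw [Matrix.adjugate_apply]
      refine hdet_mem _ fun i' j' => ?_
      rw [Matrix.updateRow_apply]
      split
      · rcases eq_or_ne j j' with h | h <;> simp [Pi.single_apply, h, one_mem, zero_mem]
      · exact hMmem i' j'
    -- linear algebra: solve for (a n j)^q
    set w : Fin ℓ → C := fun j => (a n j) ^ q with hwdef
    have hMv : M.mulVec w = fun i => a n i - bb n i := by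
      funext i
      show ∑ j, M i j * w j = _
      have := hsplit n i
      rw [eq_sub_iff_add_eq]
      linear_combination -this
    have hkey : ∀ j, M.det * w j = ∑ k, Matrix.adjugate M j k * (a n k - bb n k) := by
      intro j
      have h1 : (M.det) • w = (Matrix.adjugate M).mulVec (M.mulVec w) := by
        rw [Matrix.mulVec_mulVec, Matrix.adjugate_mul, Matrix.smul_mulVec,
          Matrix.one_mulVec]
      have h2 := congrFun h1 j
      rw [hMv] at h2
      simpa [Matrix.mulVec, dotProduct] using h2
    have hsmul : ∀ z : C, z ∈ K' → ∀ v : C,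
        v ∈ Submodule.span ↥K' (insert (1:C) (Set.range fun j => a n j)) →
        z * v ∈ Submodule.span ↥K' (insert (1:C) (Set.range fun j => a n j)) := by
      intro z hz v hv
      have h1 := Submodule.smul_mem _ (⟨z, hz⟩ : ↥K') hv
      have h2 : (⟨z, hz⟩ : ↥K') • v = z * v := rfl
      rwa [h2] at h1
    have hspan : ∀ j, (a n j) ^ q ∈
        Submodule.span ↥K' (insert (1:C) (Set.range fun j => a n j)) := by
      intro j
      have heq : (a n j) ^ q = (∑ k, (M.det⁻¹ * Matrix.adjugate M j k) * a n k)
          + (- ∑ k, M.det⁻¹ * (Matrix.adjugate M j k * bb n k)) * 1 := by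
        have h5 : M.det * (a n j ^ q) = ∑ k, Matrix.adjugate M j k * (a n k - bb n k) := hkey j
        have h4 : (a n j) ^ q = M.det⁻¹ * ∑ k, Matrix.adjugate M j k * (a n k - bb n k) := by
          rw [← h5, inv_mul_cancel_left₀ hMdet]
        rw [h4, mul_one, Finset.mul_sum, ← Finset.sum_neg_distrib, ← Finset.sum_add_distrib]
        refine Finset.sum_congr rfl fun k _ => by ring
      rw [heq]
      refine Submodule.add_mem _ (sum_mem fun k _ => ?_) ?_
      · exact hsmul _ (mul_mem (IntermediateField.inv_mem K' (hdet_mem M hMmem))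
          (hadjmem j k)) _ (Submodule.subset_span (Set.mem_insert_of_mem _ ⟨k, rfl⟩))
      · refine hsmul _ ?_ _ (Submodule.subset_span (Set.mem_insert _ _))
        refine neg_mem (sum_mem fun k _ => mul_mem (IntermediateField.inv_mem K'
          (hdet_mem M hMmem)) (mul_mem (hadjmem j k) (hbbmem k)))
    have hint := auxA hq2 (fun j => a n j) hspan
    haveI : Algebra.IsIntegral (RatFunc Fq) ↥K' := by
      have halg := IntermediateField.isAlgebraic_adjoin (K := RatFunc Fq) (L := C) hSint
      exact Algebra.isAlgebraic_iff_isIntegral.mp halg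
    exact fun i => (isIntegral_trans (a n i) (hint i)).isAlgebraic
  -- PART 3
  have hsubq : ∀ x y : C, (x - y) ^ q = x ^ q - y ^ q := by
    intro x y
    rw [hqdef, hqpm]
    exact sub_pow_char_pow x y _
  have hTcKinf : Tc Fq C ∈ Kinf Fq C :=
    (kSub Fq C).le_topologicalClosure
      ⟨algebraMap (Polynomial Fq) (RatFunc Fq) Polynomial.X, rfl⟩
  have hKclosed : IsClosed ((Kinf Fq C) : Set C) := Subfield.isClosed_topologicalClosure _
  have hTnorm : (1:ℝ) < ‖(⟨Tc Fq C, hTcKinf⟩ : ↥(Kinf Fq C))‖ := by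
    show (1:ℝ) < ‖Tc Fq C‖
    rw [hT]
    exact_mod_cast (by omega : (1:ℕ) < q)
  set BM : ℝ := 1 + Finset.univ.sup' Finset.univ_nonempty
      (fun ij : Fin ℓ × Fin ℓ => ‖M ij.1 ij.2‖) with hBM
  have hsup0 : 0 ≤ Finset.univ.sup' Finset.univ_nonempty
      (fun ij : Fin ℓ × Fin ℓ => ‖M ij.1 ij.2‖) :=
    le_trans (norm_nonneg (M ⟨0, hℓpos⟩ ⟨0, hℓpos⟩))
      (Finset.le_sup' (f := fun ij : Fin ℓ × Fin ℓ => ‖M ij.1 ij.2‖)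
        (Finset.mem_univ (⟨0, hℓpos⟩, ⟨0, hℓpos⟩)))
  have hBM0 : 0 < BM := by rw [hBM]; linarith
  have hBMle : ∀ i j, ‖M i j‖ ≤ BM := by
    intro i j
    have h1 := Finset.le_sup' (f := fun ij : Fin ℓ × Fin ℓ => ‖M ij.1 ij.2‖)
      (Finset.mem_univ (i, j))
    rw [hBM]
    linarith
  set ε : ℝ := min 1 (1/(2*BM)) with hε
  have hε0 : 0 < ε := lt_min one_pos (by positivity)
  have hε1 : ε ≤ 1 := min_le_left _ _
  have hεBM : BM * ε ≤ 1/2 := by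
    have h1 : ε ≤ 1/(2*BM) := min_le_right _ _
    calc BM * ε ≤ BM * (1/(2*BM)) := by nlinarith
      _ = 1/2 := by field_simp
  obtain ⟨n₀, hn₀⟩ : ∃ n₀, ∀ nn, n₀ ≤ nn → ∀ i, ‖a nn i‖ ≤ ε := by
    obtain ⟨n₀, h⟩ := eventually_atTop.mp (hctend.eventually (eventually_le_nhds hε0))
    exact ⟨n₀, fun nn hnn i => le_trans (hcle nn i) (h nn hnn)⟩
  have hKinfMem : ∀ y : RatFunc Fq, algebraMap (RatFunc Fq) C y ∈ Kinf Fq C :=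
    fun y => (kSub Fq C).le_topologicalClosure ⟨y, rfl⟩
  have halgKinf : ∀ x : C, IsAlgebraic (RatFunc Fq) x → IsIntegral ↥(Kinf Fq C) x := by
    intro x hx
    obtain ⟨P, hP0, hPx⟩ := hx
    set f : RatFunc Fq →+* ↥(Kinf Fq C) :=
      (algebraMap (RatFunc Fq) C).codRestrict (Kinf Fq C) hKinfMem with hf
    have hfinj : Function.Injective f := f.injective
    have hQ0 : P.map f ≠ 0 := fun h =>
      hP0 (Polynomial.map_injective f hfinj (h.trans (Polynomial.map_zero f).symm))
    refine isAlgebraic_iff_isIntegral.mp ⟨P.map f, hQ0, ?_⟩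
    have hcomp : (algebraMap ↥(Kinf Fq C) C).comp f = algebraMap (RatFunc Fq) C :=
      RingHom.ext fun y => rfl
    rw [Polynomial.aeval_def, Polynomial.eval₂_map, hcomp, ← Polynomial.aeval_def]
    exact hPx
  set SH : Set C := (Set.range fun x : Fin ℓ × Fin ℓ × Fin (d+1) =>
      (Φ x.1 x.2.1).coeff (x.2.2 : ℕ)) ∪
      (Set.range fun x : Fin n₀ × Fin ℓ => a (x.1 : ℕ) x.2) with hSH
  set H : IntermediateField ↥(Kinf Fq C) C := IntermediateField.adjoin ↥(Kinf Fq C) SH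
    with hH
  haveI hHfd : FiniteDimensional ↥(Kinf Fq C) ↥H := by
    haveI : Finite ↥SH := ((Set.finite_range _).union (Set.finite_range _)).to_subtype
    refine IntermediateField.finiteDimensional_adjoin fun x hx => ?_
    rcases hx with ⟨⟨i, j, u⟩, rfl⟩ | ⟨⟨v, j⟩, rfl⟩
    · exact halgKinf _ (hΦalg i j u)
    · exact halgKinf _ (part1 v j)
  have hHclosed : IsClosed ((H : IntermediateField ↥(Kinf Fq C) C) : Set C) := by
    letI ntf : NontriviallyNormedField ↥(Kinf Fq C) :=
      { (inferInstance : NormedField ↥(Kinf Fq C)) with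
        non_trivial := ⟨⟨Tc Fq C, hTcKinf⟩, hTnorm⟩ }
    letI cs : CompleteSpace ↥(Kinf Fq C) := hKclosed.completeSpace_coe
    letI mod : Module ↥(Kinf Fq C) C := Algebra.toModule
    letI csm : @ContinuousSMul ↥(Kinf Fq C) C Algebra.toSMul _ _ := ⟨by
      have h : (fun pp : ↥(Kinf Fq C) × C => pp.1 • pp.2)
          = fun pp : ↥(Kinf Fq C) × C => (pp.1 : C) * pp.2 := rfl
      rw [h]
      exact (continuous_subtype_val.comp continuous_fst).mul continuous_snd⟩
    exact @Submodule.closed_of_finiteDimensional ↥(Kinf Fq C) C ntf cs _ _ _ mod csm _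
      (Subalgebra.toSubmodule H.toSubalgebra) hHfd
  have hmemH : ∀ nn, ∀ i, a nn i ∈ H := by
    intro nn
    induction nn using Nat.strong_induction_on with
    | _ nn ih =>
    rcases lt_or_ge nn n₀ with hlt | hge
    · exact fun i => IntermediateField.subset_adjoin _ _ (Or.inr ⟨(⟨nn, hlt⟩, i), rfl⟩)
    · have hΦH : ∀ i j u, (Φ i j).coeff u ∈ H := by
        intro i j u
        rcases le_or_gt u d with hu | hu
        · exact IntermediateField.subset_adjoin _ _
            (Or.inl ⟨(i, j, (⟨u, by omega⟩ : Fin (d+1))), rfl⟩)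
        · rw [hcoeffzero i j u hu]; exact zero_mem H
      have hMH : ∀ i j, M i j ∈ H := fun i j => pow_mem (hΦH i j 0) q
      have hbbH : ∀ i, bb nn i ∈ H := by
        intro i
        refine sum_mem fun j _ => sum_mem fun uv huv => ?_
        have h1 := Finset.HasAntidiagonal.mem_antidiagonal.mp (Finset.mem_of_mem_erase huv)
        have h2 := Finset.ne_of_mem_erase huv
        have hv : uv.2 < nn := by
          rcases Nat.eq_zero_or_pos uv.1 with h3 | h3
          · exfalso
            apply h2
            have h4 : uv = (uv.1, uv.2) := rfl
            rw [h4, h3]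
            simp at h1 ⊢
            omega
          · omega
        exact mul_mem (pow_mem (hΦH i j uv.1) q) (pow_mem (ih uv.2 hv j) q)
      set y : ℕ → Fin ℓ → C := fun K => Nat.rec (fun _ => 0)
        (fun _ yK i => (∑ j, M i j * (yK j) ^ q) + bb nn i) K with hy
      have hy0 : ∀ i, y 0 i = 0 := fun i => rfl
      have hystep : ∀ K i, y (K+1) i = (∑ j, M i j * (y K j) ^ q) + bb nn i :=
        fun K i => rfl
      have hyH : ∀ K i, y K i ∈ H := by
        intro K
        induction K with
        | zero => intro i; rw [hy0]; exact zero_mem H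
        | succ K ihK =>
          intro i
          rw [hystep]
          exact add_mem (sum_mem fun j _ => mul_mem (hMH i j) (pow_mem (ihK j) q)) (hbbH i)
      have hbound : ∀ K i, ‖y K i - a nn i‖ ≤ (1/2:ℝ)^K * ε := by
        intro K
        induction K with
        | zero =>
          intro i
          rw [hy0, zero_sub, norm_neg]
          simpa using hn₀ nn hge i
        | succ K ihK =>
          intro i
          have heq : y (K+1) i - a nn i = ∑ j, M i j * (y K j - a nn j) ^ q := by
            rw [hystep K i]
            have h6 : ∀ j : Fin ℓ, M i j * (y K j - a nn j) ^ q
                = M i j * (y K j) ^ q - M i j * (a nn j) ^ q := by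
              intro j
              rw [hsubq]
              ring
            rw [Finset.sum_congr rfl fun j _ => h6 j, Finset.sum_sub_distrib]
            rw [hsplit nn i]
            ring
          rw [heq]
          have hhalf0 : (0:ℝ) < (1/2:ℝ)^K := by positivity
          have hhalf1 : ((1/2:ℝ))^K ≤ 1 := pow_le_one₀ (by norm_num) (by norm_num)
          have htgt0 : (0:ℝ) ≤ (1/2:ℝ)^(K+1) * ε := by positivity
          refine aux_nonarch hna _ _ htgt0 fun j _ => ?_
          rw [norm_mul, norm_pow]
          have hz := ihK j
          have hz0 : (0:ℝ) ≤ ‖y K j - a nn j‖ := norm_nonneg _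
          have ht0 : (0:ℝ) ≤ (1/2:ℝ)^K * ε := by positivity
          have ht1 : (1/2:ℝ)^K * ε ≤ 1 := by nlinarith
          have h7 : ‖y K j - a nn j‖ ^ q ≤ ((1/2:ℝ)^K * ε) ^ q :=
            pow_le_pow_left₀ hz0 hz q
          have h8 : ((1/2:ℝ)^K * ε) ^ q ≤ ((1/2:ℝ)^K * ε) ^ 2 :=
            pow_le_pow_of_le_one ht0 ht1 hq2
          have h9 : ‖M i j‖ * ‖y K j - a nn j‖ ^ q ≤ BM * ((1/2:ℝ)^K * ε) ^ 2 := by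
            have hM0 : (0:ℝ) ≤ ‖M i j‖ := norm_nonneg _
            have hqn : (0:ℝ) ≤ ‖y K j - a nn j‖ ^ q := pow_nonneg hz0 q
            nlinarith [hBMle i j]
          have h10 : BM * ((1/2:ℝ)^K * ε) ^ 2 ≤ (1/2:ℝ)^(K+1) * ε := by
            have h11 : ((1/2:ℝ)^K * ε) ^ 2 = ((1/2:ℝ)^K)^2 * ε^2 := by ring
            have h12 : ((1/2:ℝ)^K)^2 ≤ (1/2:ℝ)^K := by nlinarith
            have h13 : (1/2:ℝ)^(K+1) = (1/2) * (1/2:ℝ)^K := by ring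
            nlinarith
          linarith
      intro i
      have hnorm0 : Tendsto (fun K => ‖y K i - a nn i‖) atTop (nhds 0) := by
        have h2 : Tendsto (fun K : ℕ => (1/2:ℝ)^K * ε) atTop (nhds 0) := by
          have h3 := tendsto_pow_atTop_nhds_zero_of_lt_one
            (by norm_num : (0:ℝ) ≤ 1/2) (by norm_num : (1/2:ℝ) < 1)
          simpa using h3.mul_const ε
        exact squeeze_zero (fun K => norm_nonneg _) (fun K => hbound K i) h2
      have hlim2 : Tendsto (fun K => y K i) atTop (nhds (a nn i)) := by
        rw [tendsto_iff_norm_sub_tendsto_zero]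
        exact hnorm0
      exact hHclosed.mem_of_tendsto hlim2 (Filter.Eventually.of_forall fun K => hyH K i)
  have part3 : ∀ i, FiniteDimensional ↥(Kinf Fq C)
      ↥(IntermediateField.adjoin ↥(Kinf Fq C) (Set.range fun nn : ℕ => a nn i)) := by
    intro i
    have hle : IntermediateField.adjoin ↥(Kinf Fq C) (Set.range fun nn : ℕ => a nn i) ≤ H := by
      rw [IntermediateField.adjoin_le_iff]
      rintro x ⟨nn, rfl⟩
      exact hmemH nn i
    have hinj : Function.Injective (IntermediateField.inclusion hle) :=
      RingHom.injective (IntermediateField.inclusion hle).toRingHom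
    exact FiniteDimensional.of_injective (IntermediateField.inclusion hle).toLinearMap hinj
  exact fun i => ⟨fun n => part1 n i, part2 i, part3 i⟩
end
end

section
/- Let L ⊇ K ⊇ F be a tower of commutative rings such that L and F are Dedekind domains and L is a finitely generated projective F-module. Then K is a Dedekind domain if and only if the quotient F-module L/K is projective. -/
theorem pidOfLocalDedekind (R : Type*) [CommRing R] [IsDomain R] [IsDedekindDomain R]
    [IsLocalRing R] : IsPrincipalIdealRing R := by
  apply IsPrincipalIdealRing.of_finite_primes
  apply Set.Finite.subset ((Set.finite_singleton (IsLocalRing.maximalIdeal R)).insert ⊥)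
  intro I hI
  rcases eq_or_ne I ⊥ with h | h
  · exact Set.mem_insert_iff.mpr (Or.inl h)
  · have : I.IsMaximal := Ring.DimensionLEOne.maximalOfPrime h hI
    exact Set.mem_insert_iff.mpr (Or.inr (by simp [IsLocalRing.eq_maximalIdeal this]))

theorem noZeroSMulDivisorsLocalized {R M : Type*} [CommRing R] [IsDomain R] [AddCommGroup M]
    [Module R M] [NoZeroSMulDivisors R M] (S : Submonoid R) (hS : S ≤ nonZeroDivisors R) :
    NoZeroSMulDivisors (Localization S) (LocalizedModule S M) := by
  constructor
  intro c x hcx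
  obtain ⟨⟨r, s⟩, rfl⟩ := IsLocalization.mk'_surjective S c
  obtain ⟨⟨m, t⟩, rfl⟩ := IsLocalizedModule.mk'_surjective S (LocalizedModule.mkLinearMap S M) x
  simp only [Function.uncurry] at hcx ⊢
  rw [IsLocalizedModule.mk'_smul_mk' (f := LocalizedModule.mkLinearMap S M) (Localization S),
    IsLocalizedModule.mk'_eq_zero, IsLocalizedModule.eq_zero_iff (S := S)] at hcx
  obtain ⟨u, hu⟩ := hcx
  rw [Submonoid.smul_def, smul_smul] at hu
  rcases smul_eq_zero.mp hu with h0 | h0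
  · left
    have hu0 : (u : R) ≠ 0 := nonZeroDivisors.ne_zero (hS u.2)
    have hr : r = 0 := by
      rcases mul_eq_zero.mp h0 with h | h
      · exact absurd h hu0
      · exact h
    rw [hr, IsLocalization.mk'_zero]
  · right
    rw [h0, IsLocalizedModule.mk'_zero]

theorem projectiveOfFiniteTorsionFree {R M : Type*} [CommRing R] [IsDomain R]
    [IsDedekindDomain R] [AddCommGroup M] [Module R M] [Module.Finite R M]
    [NoZeroSMulDivisors R M] : Module.Projective R M := by
  have : Module.FinitePresentation R M := Module.finitePresentation_of_finite R M
  apply Module.projective_of_localization_maximal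
  intro I hI
  haveI : IsPrincipalIdealRing (Localization.AtPrime I) := pidOfLocalDedekind _
  haveI : Module.Finite (Localization.AtPrime I) (LocalizedModule I.primeCompl M) :=
    Module.Finite.of_isLocalizedModule I.primeCompl (LocalizedModule.mkLinearMap I.primeCompl M)
  haveI : NoZeroSMulDivisors (Localization.AtPrime I) (LocalizedModule I.primeCompl M) :=
    noZeroSMulDivisorsLocalized I.primeCompl I.primeCompl_le_nonZeroDivisors
  haveI : Module.Free (Localization.AtPrime I) (LocalizedModule I.primeCompl M) :=
    Module.free_of_finite_type_torsion_free'
  exact Module.Projective.of_free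

theorem torsionFreeOfProjective {R M : Type*} [CommRing R] [IsDomain R] [AddCommGroup M]
    [Module R M] (h : Module.Projective R M) : NoZeroSMulDivisors R M := by
  obtain ⟨s, hs⟩ := h.out
  haveI : NoZeroSMulDivisors R (M →₀ R) := ⟨fun {c x} hcx => by
    by_cases hc : c = 0
    · exact Or.inl hc
    · right
      ext i
      have := DFunLike.congr_fun hcx i
      simp at this
      tauto⟩
  exact Function.Injective.noZeroSMulDivisors s hs.injective (map_zero s) (map_smul s)

noncomputable section
open scoped Classical

variable (L : Type) [CommRing L] [IsDomain L]

/-- A subring `K` containing the subring `F` is in particular an `F`-submodule of `L`. -/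
def subringSubmodule (F K : Subring L) (hFK : F ≤ K) : Submodule ↥F L where
  carrier := K
  add_mem' := fun ha hb => K.add_mem ha hb
  zero_mem' := K.zero_mem
  smul_mem' := fun c x hx => by
    rw [Subring.smul_def]
    exact K.mul_mem (hFK c.2) hx

set_option maxHeartbeats 2000000 in
theorem statement11 (F K : Subring L) (hFK : F ≤ K)
    (hL : IsDedekindDomain L) (hF : IsDedekindDomain ↥F)
    (hfin : Module.Finite ↥F L) (hproj : Module.Projective ↥F L) :
    IsDedekindDomain ↥K ↔
      Module.Projective ↥F (L ⧸ subringSubmodule L F K hFK) := by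
  classical
  haveI := hL
  haveI := hF
  haveI := hfin
  set K' : Submodule ↥F L := subringSubmodule L F K hFK with hK'def
  letI : Algebra ↥F ↥K := (Subring.inclusion hFK).toAlgebra
  haveI : IsScalarTower ↥F ↥K L := IsScalarTower.of_algebraMap_eq (fun x => rfl)
  haveI : IsNoetherian ↥F L := isNoetherian_of_isNoetherianRing_of_finite ↥F L
  let e : ↥K' ≃ₗ[↥F] ↥K :=
    { toFun := fun x => ⟨x.1, x.2⟩
      invFun := fun x => ⟨x.1, x.2⟩
      map_add' := fun x y => rfl
      map_smul' := fun c x => rfl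
      left_inv := fun x => rfl
      right_inv := fun x => rfl }
  haveI : Module.Finite ↥F ↥K' := Module.Finite.iff_fg.mpr (IsNoetherian.noetherian K')
  haveI : Module.Finite ↥F ↥K := Module.Finite.equiv e
  haveI : Algebra.IsIntegral ↥F ↥K := Algebra.IsIntegral.of_finite _ _
  haveI : Algebra.IsIntegral ↥F L := Algebra.IsIntegral.of_finite _ _
  haveI : Module.Finite ↥F (L ⧸ K') :=
    Module.Finite.of_surjective K'.mkQ (Submodule.Quotient.mk_surjective K')
  haveI : IsNoetherian ↥F ↥K := isNoetherian_of_linearEquiv e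
  haveI : IsNoetherianRing ↥K := isNoetherian_of_tower ↥F inferInstance
  haveI : IsScalarTower ↥F ↥K (FractionRing L) := IsScalarTower.of_algebraMap_eq fun x => rfl
  have hKQLinj : Function.Injective (algebraMap ↥K (FractionRing L)) :=
    (IsFractionRing.injective L (FractionRing L)).comp Subtype.val_injective
  letI g : FractionRing ↥K →+* FractionRing L := IsFractionRing.lift hKQLinj
  letI gAlg : FractionRing ↥K →ₐ[↥K] FractionRing L :=
    { toRingHom := g, commutes' := fun r => IsFractionRing.lift_algebraMap hKQLinj r }
  have gInj : Function.Injective gAlg := g.injective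
  have gcomm : ∀ k : ↥K,
      gAlg (algebraMap ↥K (FractionRing ↥K) k) = algebraMap L (FractionRing L) (k : L) :=
    fun k => IsFractionRing.lift_algebraMap hKQLinj k
  constructor
  · -- K Dedekind → L/K projective
    intro hK
    haveI := hK
    haveI : NoZeroSMulDivisors ↥F (L ⧸ K') := by
      constructor
      intro c x hcx
      by_cases hc : c = 0
      · exact Or.inl hc
      refine Or.inr ?_
      obtain ⟨y, rfl⟩ := Submodule.Quotient.mk_surjective K' x
      rw [← Submodule.Quotient.mk_smul, Submodule.Quotient.mk_eq_zero] at hcx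
      rw [Submodule.Quotient.mk_eq_zero]
      have hcy : (c : L) * y ∈ K := hcx
      have hcL : (c : L) ≠ 0 := fun h => hc (Subtype.ext h)
      have hcQL : algebraMap L (FractionRing L) (c : L) ≠ 0 := fun h =>
        hcL ((IsFractionRing.injective L (FractionRing L)) (h.trans (map_zero _).symm))
      let cK : ↥K := ⟨(c : L), hFK c.2⟩
      let aK : ↥K := ⟨(c : L) * y, hcy⟩
      let q : FractionRing ↥K :=
        algebraMap ↥K (FractionRing ↥K) aK / algebraMap ↥K (FractionRing ↥K) cK
      have h1 : gAlg (algebraMap ↥K (FractionRing ↥K) aK)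
          = algebraMap L (FractionRing L) ((c : L) * y) := gcomm aK
      have h2 : gAlg (algebraMap ↥K (FractionRing ↥K) cK)
          = algebraMap L (FractionRing L) (c : L) := gcomm cK
      have hgq : gAlg q = algebraMap L (FractionRing L) y := by
        show gAlg (algebraMap ↥K (FractionRing ↥K) aK / algebraMap ↥K (FractionRing ↥K) cK) = _
        rw [map_div₀, h1, h2, map_mul, mul_comm, mul_div_assoc, div_self hcQL, mul_one]
      have hyint : IsIntegral ↥K y :=
        IsIntegral.tower_top (Algebra.IsIntegral.isIntegral (R := ↥F) y)
      have hmap : IsIntegral ↥K (algebraMap L (FractionRing L) y) :=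
        IsIntegral.map (IsScalarTower.toAlgHom ↥K L (FractionRing L)) hyint
      rw [← hgq] at hmap
      have hqint : IsIntegral ↥K q := (isIntegral_algHom_iff gAlg gInj).mp hmap
      obtain ⟨z, hz⟩ := IsIntegrallyClosed.isIntegral_iff.mp hqint
      have hzy : algebraMap L (FractionRing L) (z : L) = algebraMap L (FractionRing L) y := by
        rw [← hgq, ← hz, gcomm]
      have hyz : y = (z : L) := ((IsFractionRing.injective L (FractionRing L)) hzy).symm
      show y ∈ K
      rw [hyz]
      exact z.2
    exact projectiveOfFiniteTorsionFree
  · -- L/K projective → K Dedekind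
    intro hproj'
    haveI htf : NoZeroSMulDivisors ↥F (L ⧸ K') := torsionFreeOfProjective hproj'
    have hdim : Ring.DimensionLEOne ↥K := by
      constructor
      intro p hp hprime
      haveI := hprime
      have hne : p.comap (algebraMap ↥F ↥K) ≠ ⊥ := by
        obtain ⟨x, hxp, hx0⟩ := Submodule.exists_mem_ne_zero_of_ne_bot hp
        exact Ideal.comap_ne_bot_of_integral_mem hx0 hxp (Algebra.IsIntegral.isIntegral x)
      have hcomap : (p.comap (algebraMap ↥F ↥K)).IsMaximal :=
        Ring.DimensionLEOne.maximalOfPrime hne (Ideal.IsPrime.comap _)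
      exact Ideal.isMaximal_of_isIntegral_of_isMaximal_comap p hcomap
    have hic : ∀ {q : FractionRing ↥K}, IsIntegral ↥K q →
        ∃ y, algebraMap ↥K (FractionRing ↥K) y = q := by
      intro q hq
      have hgq_int : IsIntegral ↥K (gAlg q) := (isIntegral_algHom_iff gAlg gInj).mpr hq
      have hFint : IsIntegral ↥F (gAlg q) := isIntegral_trans _ hgq_int
      have hLint : IsIntegral L (gAlg q) := IsIntegral.tower_top hFint
      obtain ⟨x, hx⟩ := IsIntegrallyClosed.isIntegral_iff.mp hLint
      obtain ⟨⟨a, b⟩, hab⟩ := IsLocalization.mk'_surjective (nonZeroDivisors ↥K) q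
      simp only at hab
      have hspec := IsLocalization.mk'_spec (FractionRing ↥K) a b
      rw [hab] at hspec
      have h3 := congrArg gAlg hspec
      rw [map_mul, gcomm, gcomm, ← hx] at h3
      have hxb : x * ((b : ↥K) : L) = ((a : ↥K) : L) := by
        apply IsFractionRing.injective L (FractionRing L)
        rw [map_mul]
        exact h3
      have hbK0 : ((b : ↥K)) ≠ (0 : ↥K) := nonZeroDivisors.ne_zero b.2
      have hIne : ((Ideal.span {(b : ↥K)}).comap (algebraMap ↥F ↥K)) ≠ ⊥ :=
        Ideal.comap_ne_bot_of_integral_mem hbK0 (Ideal.subset_span rfl)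
          (Algebra.IsIntegral.isIntegral (b : ↥K))
      obtain ⟨c, hcmem, hc0⟩ := Submodule.exists_mem_ne_zero_of_ne_bot hIne
      obtain ⟨k, hk⟩ := Ideal.mem_span_singleton'.mp (Ideal.mem_comap.mp hcmem)
      have hcx : c • (Submodule.Quotient.mk x : L ⧸ K') = 0 := by
        rw [← Submodule.Quotient.mk_smul, Submodule.Quotient.mk_eq_zero]
        show (c : L) * x ∈ K
        have hcL : (c : L) = (k : L) * ((b : ↥K) : L) :=
          (congrArg (Subtype.val : ↥K → L) hk).symm
        rw [hcL, mul_assoc, mul_comm ((b : ↥K) : L) x, hxb]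
        exact K.mul_mem k.2 (a : ↥K).2
      have hxK : x ∈ K := by
        rcases eq_zero_or_eq_zero_of_smul_eq_zero hcx with h | h
        · exact absurd h hc0
        · exact (Submodule.Quotient.mk_eq_zero K').mp h
      refine ⟨⟨x, hxK⟩, gInj ?_⟩
      rw [gcomm, hx]
    haveI : IsDedekindRing ↥K :=
      (isDedekindRing_iff ↥K (FractionRing ↥K)).mpr ⟨inferInstance, hdim, hic⟩
    exact inferInstance
end
end

section
/- For every x ∈ k_∞ with 0 < |x|_∞ < 1 one has e*(x) ≠ 0. -/
noncomputable section
open scoped Classical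
set_option synthInstance.maxHeartbeats 1000000
set_option maxHeartbeats 1000000

variable (Fq : Type) [Field Fq] [Fintype Fq]
variable (C : Type) [NormedField C] [CompleteSpace C] [IsAlgClosed C]
  [Algebra (RatFunc Fq) C]

/-- The natural map `Fq → C_∞`. -/
def thetaF : Fq →+* C := (thetaP Fq C).comp Polynomial.C

/-- `D_n = ∏_{i=0}^{n-1} (T^{qⁿ} - T^{qⁱ})`. -/
def Dn (n : ℕ) : C :=
  ∏ i ∈ Finset.range n,
    (Tc Fq C ^ (Fintype.card Fq ^ n) - Tc Fq C ^ (Fintype.card Fq ^ i))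

/-- The Carlitz exponential `exp_C(z) = Σ_{n≥0} z^{qⁿ}/D_n`. -/
def expC (z : C) : C := ∑' n : ℕ, z ^ (Fintype.card Fq ^ n) / Dn Fq C n

/-- `ϖ = T·T̃·∏_{i=1}^∞ (1 - T^{1-qⁱ})⁻¹`. -/
def varpi (Ttil : C) : C :=
  Tc Fq C * Ttil *
    (∏' i : ℕ, (1 - (Tc Fq C) ^ ((1 : ℤ) - (Fintype.card Fq : ℤ) ^ (i + 1))))⁻¹

/-- `e(x) = exp_C(ϖ x)`. -/
def eFun (Ttil : C) (x : C) : C := expC Fq C (varpi Fq C Ttil * x)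

/-- The `i`-th Maclaurin coefficient `a_i` of
`Ω^{(-1)}(t) = T̃^{-1}·∏_{i=0}^∞ (1 - t/T^{qⁱ})` (infinite product expanded
coefficientwise). -/
def OmegaNegCoeff (Ttil : C) (n : ℕ) : C :=
  Ttil⁻¹ * (-1) ^ n *
    ∑' s : {s : Finset ℕ // s.card = n},
      ∏ i ∈ s.1, (Tc Fq C ^ (Fintype.card Fq ^ i))⁻¹

/-- `e*(x) = Σ_{i≥0} Res(Tⁱx)·a_i`, where `Res : k_∞ → Fq` is the residue functional. -/
def estar (Res : C → Fq) (Ttil : C) (x : C) : C :=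
  ∑' i : ℕ, thetaF Fq C (Res (Tc Fq C ^ i * x)) * OmegaNegCoeff Fq C Ttil i

/-- The hypotheses characterizing the residue functional `Res : k_∞ → Fq`: it is the
unique `Fq`-linear functional on `k_∞` with kernel `Fq[T] + T^{-2}·Fq[[1/T]]`
(equivalently, `Res x = 0` iff `x` is within distance `q^{-2}` of some polynomial)
and `Res(1/T) = 1`. -/
def IsRes (Res : C → Fq) : Prop :=
  (∀ x ∈ Kinf Fq C, ∀ y ∈ Kinf Fq C, Res (x + y) = Res x + Res y) ∧
  (∀ c : Fq, ∀ x ∈ Kinf Fq C, Res (thetaF Fq C c * x) = c * Res x) ∧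
  (∀ x ∈ Kinf Fq C,
    (Res x = 0 ↔ ∃ a : Polynomial Fq,
      ‖x - thetaP Fq C a‖ ≤ (Fintype.card Fq : ℝ) ^ (-2 : ℤ))) ∧
  Res (Tc Fq C)⁻¹ = 1


/-! ### Auxiliary lemmas -/

section Aux

set_option linter.unusedSectionVars false

variable {Fq C}

lemma aux_pow_lt {a : ℝ} (ha : 1 < a) {m n : ℕ} (h : m < n) : a ^ m < a ^ n := by
  gcongr

lemma aux_pow_le {a : ℝ} (ha : 1 ≤ a) {m n : ℕ} (h : m ≤ n) : a ^ m ≤ a ^ n := by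
  gcongr

lemma aux_dom_add (hna : ∀ x y : C, ‖x + y‖ ≤ max ‖x‖ ‖y‖) {a b : C}
    (h : ‖b‖ < ‖a‖) : ‖a + b‖ = ‖a‖ := by
  haveI : IsUltrametricDist C :=
    IsUltrametricDist.isUltrametricDist_of_forall_norm_add_le_max_norm hna
  rw [IsUltrametricDist.norm_add_eq_max_of_norm_ne_norm h.ne', max_eq_left h.le]

lemma aux_summable (hna : ∀ x y : C, ‖x + y‖ ≤ max ‖x‖ ‖y‖) {ι : Type}
    {f : ι → C} (h : Filter.Tendsto f Filter.cofinite (nhds 0)) : Summable f := by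
  haveI : IsUltrametricDist C :=
    IsUltrametricDist.isUltrametricDist_of_forall_norm_add_le_max_norm hna
  exact NonarchimedeanAddGroup.summable_of_tendsto_cofinite_zero h

lemma aux_tsum_dominant (hna : ∀ x y : C, ‖x + y‖ ≤ max ‖x‖ ‖y‖) {ι : Type}
    (f : ι → C) (hf : Summable f) (i0 : ι) (c : ℝ) (hc0 : 0 ≤ c)
    (hc : ∀ i, i ≠ i0 → ‖f i‖ ≤ c) (hlt : c < ‖f i0‖) :
    ‖∑' i, f i‖ = ‖f i0‖ := by
  haveI : IsUltrametricDist C :=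
    IsUltrametricDist.isUltrametricDist_of_forall_norm_add_le_max_norm hna
  rw [Summable.tsum_eq_add_tsum_ite hf i0]
  apply aux_dom_add hna
  refine lt_of_le_of_lt ?_ hlt
  refine IsUltrametricDist.norm_tsum_le_of_forall_le_of_nonneg hc0 fun i => ?_
  by_cases h : i = i0
  · simp [h, hc0]
  · simpa [h] using hc i h

lemma aux_norm_thetaF {c : Fq} (hc : c ≠ 0) : ‖thetaF Fq C c‖ = 1 := by
  have hq : 1 < Fintype.card Fq := Fintype.one_lt_card
  have h1 : (thetaF Fq C c) ^ (Fintype.card Fq - 1) = 1 := by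
    rw [← map_pow, FiniteField.pow_card_sub_one_eq_one c hc, map_one]
  have h2 : ‖thetaF Fq C c‖ ^ (Fintype.card Fq - 1) = 1 := by
    rw [← norm_pow, h1, norm_one]
  have hn : Fintype.card Fq - 1 ≠ 0 := by omega
  rcases lt_trichotomy ‖thetaF Fq C c‖ 1 with h | h | h
  · have := pow_lt_one₀ (norm_nonneg _) h hn
    rw [h2] at this; exact absurd this (lt_irrefl _)
  · exact h
  · have := one_lt_pow₀ h hn
    rw [h2] at this; exact absurd this (lt_irrefl _)

lemma aux_norm_thetaF_le (c : Fq) : ‖thetaF Fq C c‖ ≤ 1 := by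
  rcases eq_or_ne c 0 with rfl | h
  · simp
  · rw [aux_norm_thetaF h]

lemma aux_geom {q : ℕ} (hq : 2 ≤ q) (n : ℕ) : ∑ i ∈ Finset.range n, q ^ i < q ^ n := by
  induction n with
  | zero => simp
  | succ n ih =>
    rw [Finset.sum_range_succ, pow_succ]
    have h1 : 0 < q ^ n := Nat.pow_pos (by omega)
    nlinarith

lemma aux_minsum {q n : ℕ} (hq : 2 ≤ q) {s : Finset ℕ} (hcard : s.card = n)
    (hne : s ≠ Finset.range n) : q ^ n ≤ ∑ i ∈ s, q ^ i := by
  have hsub : ¬ s ⊆ Finset.range n := fun h =>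
    hne (Finset.eq_of_subset_of_card_le h (by simp [hcard]))
  obtain ⟨m, hm, hmn⟩ : ∃ m ∈ s, n ≤ m := by
    by_contra h
    push_neg at h
    exact hsub fun i hi => Finset.mem_range.mpr (h i hi)
  calc q ^ n ≤ q ^ m := Nat.pow_le_pow_right (by omega) hmn
    _ ≤ ∑ i ∈ s, q ^ i := Finset.single_le_sum (fun i _ => Nat.zero_le _) hm

lemma aux_term_norm (hT : ‖Tc Fq C‖ = (Fintype.card Fq : ℝ)) (s : Finset ℕ) :
    ‖∏ i ∈ s, (Tc Fq C ^ (Fintype.card Fq ^ i))⁻¹‖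
      = ((Fintype.card Fq : ℝ) ^ (∑ i ∈ s, Fintype.card Fq ^ i))⁻¹ := by
  rw [norm_prod]
  simp_rw [norm_inv, norm_pow, hT]
  rw [← Finset.prod_pow_eq_pow_sum s (fun i => Fintype.card Fq ^ i) ((Fintype.card Fq : ℝ)),
    Finset.prod_inv_distrib]

lemma aux_inner_norm (hna : ∀ x y : C, ‖x + y‖ ≤ max ‖x‖ ‖y‖)
    (hT : ‖Tc Fq C‖ = (Fintype.card Fq : ℝ)) (n : ℕ) :
    ‖∑' s : {s : Finset ℕ // s.card = n}, ∏ i ∈ s.1, (Tc Fq C ^ (Fintype.card Fq ^ i))⁻¹‖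
      = ((Fintype.card Fq : ℝ) ^ (∑ i ∈ Finset.range n, Fintype.card Fq ^ i))⁻¹ := by
  have hq2 : 2 ≤ Fintype.card Fq := Fintype.one_lt_card
  have hq1 : (1 : ℝ) < (Fintype.card Fq : ℝ) := by exact_mod_cast hq2
  have hq0 : (0 : ℝ) < (Fintype.card Fq : ℝ) := by linarith
  set q := Fintype.card Fq with hqdef
  set g : {s : Finset ℕ // s.card = n} → C := fun s => ∏ i ∈ s.1, (Tc Fq C ^ (q ^ i))⁻¹ with hg
  have hgnorm : ∀ s : {s : Finset ℕ // s.card = n},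
      ‖g s‖ = ((q : ℝ) ^ (∑ i ∈ s.1, q ^ i))⁻¹ := fun s => aux_term_norm hT s.1
  -- summability
  have hsum : Summable g := by
    apply aux_summable hna
    refine Metric.tendsto_nhds.mpr fun ε hε => ?_
    obtain ⟨N, hN⟩ := pow_unbounded_of_one_lt (ε⁻¹) hq1
    have h3 : ((q : ℝ) ^ N)⁻¹ < ε := by
      have := inv_strictAnti₀ (by positivity : (0:ℝ) < ε⁻¹) hN
      rwa [inv_inv] at this
    rw [Filter.eventually_cofinite]
    have hfin : Set.Finite {s : {s : Finset ℕ // s.card = n} | s.1 ⊆ Finset.range N} := by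
      apply Set.Finite.of_finite_image (f := Subtype.val) ?_ Subtype.val_injective.injOn
      apply Set.Finite.subset (Finset.range N).powerset.finite_toSet
      rintro t ⟨s, hs, rfl⟩
      exact Finset.mem_coe.mpr (Finset.mem_powerset.mpr hs)
    apply Set.Finite.subset hfin
    intro s hs
    simp only [Set.mem_setOf_eq] at hs ⊢
    intro i hi
    rw [Finset.mem_range]
    by_contra hiN
    push_neg at hiN
    apply hs
    rw [dist_zero_right]
    calc ‖g s‖ = ((q : ℝ) ^ (∑ j ∈ s.1, q ^ j))⁻¹ := hgnorm s
      _ ≤ ((q : ℝ) ^ N)⁻¹ := by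
          apply inv_anti₀ (by positivity)
          apply aux_pow_le hq1.le
          calc N ≤ i := hiN
            _ ≤ q ^ i := Nat.le_of_lt (Nat.lt_pow_self (n := i) (by omega))
            _ ≤ ∑ j ∈ s.1, q ^ j := Finset.single_le_sum (fun j _ => Nat.zero_le _) hi
      _ < ε := h3
  -- dominant term
  have hcard : (Finset.range n).card = n := Finset.card_range n
  have := aux_tsum_dominant hna g hsum ⟨Finset.range n, hcard⟩
    (((q : ℝ) ^ (q ^ n))⁻¹) (by positivity)
    (fun s hsne => by
      rw [hgnorm s]
      have hne : s.1 ≠ Finset.range n := fun h => hsne (Subtype.ext h)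
      have := aux_minsum hq2 s.2 hne
      apply inv_anti₀ (by positivity)
      exact_mod_cast aux_pow_le hq1.le this)
    (by
      rw [hgnorm ⟨Finset.range n, hcard⟩]
      apply inv_strictAnti₀ (by positivity)
      exact aux_pow_lt hq1 (aux_geom hq2 n))
  rw [this, hgnorm ⟨Finset.range n, hcard⟩]

lemma aux_omega_norm (hna : ∀ x y : C, ‖x + y‖ ≤ max ‖x‖ ‖y‖)
    (hT : ‖Tc Fq C‖ = (Fintype.card Fq : ℝ)) (Ttil : C) (n : ℕ) :
    ‖OmegaNegCoeff Fq C Ttil n‖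
      = ‖Ttil⁻¹‖ * ((Fintype.card Fq : ℝ) ^ (∑ i ∈ Finset.range n, Fintype.card Fq ^ i))⁻¹ := by
  unfold OmegaNegCoeff
  rw [norm_mul, norm_mul, norm_pow, norm_neg, norm_one, one_pow, mul_one,
    aux_inner_norm hna hT n]

lemma aux_norm_thetaP (hna : ∀ x y : C, ‖x + y‖ ≤ max ‖x‖ ‖y‖)
    (hT : ‖Tc Fq C‖ = (Fintype.card Fq : ℝ)) :
    ∀ a : Polynomial Fq, a ≠ 0 → ‖thetaP Fq C a‖ = (Fintype.card Fq : ℝ) ^ a.natDegree := by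
  have hq2 : 2 ≤ Fintype.card Fq := Fintype.one_lt_card
  have hq1 : (1 : ℝ) < (Fintype.card Fq : ℝ) := by exact_mod_cast hq2
  suffices H : ∀ n : ℕ, ∀ a : Polynomial Fq, a.natDegree = n → a ≠ 0 →
      ‖thetaP Fq C a‖ = (Fintype.card Fq : ℝ) ^ a.natDegree from
    fun a ha => H a.natDegree a rfl ha
  intro n
  induction n using Nat.strong_induction_on with
  | _ n ih =>
    intro a hd ha
    have hlead : ‖thetaP Fq C (Polynomial.C a.leadingCoeff * Polynomial.X ^ a.natDegree)‖
        = (Fintype.card Fq : ℝ) ^ a.natDegree := by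
      rw [map_mul, map_pow, norm_mul, norm_pow]
      rw [show thetaP Fq C (Polynomial.C a.leadingCoeff) = thetaF Fq C a.leadingCoeff from rfl]
      rw [aux_norm_thetaF (Polynomial.leadingCoeff_ne_zero.mpr ha)]
      rw [show thetaP Fq C Polynomial.X = Tc Fq C from rfl, hT, one_mul]
    by_cases he : a.eraseLead = 0
    · conv_lhs => rw [← Polynomial.eraseLead_add_C_mul_X_pow a, he, zero_add]
      exact hlead
    · have hlt : a.eraseLead.natDegree < a.natDegree :=
        (Polynomial.eraseLead_natDegree_lt_or_eraseLead_eq_zero a).resolve_right he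
      have hrec : ‖thetaP Fq C a.eraseLead‖ = (Fintype.card Fq : ℝ) ^ a.eraseLead.natDegree :=
        ih a.eraseLead.natDegree (hd ▸ hlt) a.eraseLead rfl he
      conv_lhs => rw [← Polynomial.eraseLead_add_C_mul_X_pow a]
      rw [map_add, add_comm, aux_dom_add hna (by rw [hrec, hlead]; exact aux_pow_lt hq1 hlt)]
      exact hlead

lemma aux_norm_kSub (hna : ∀ x y : C, ‖x + y‖ ≤ max ‖x‖ ‖y‖)
    (hT : ‖Tc Fq C‖ = (Fintype.card Fq : ℝ)) {y : C} (hy : y ∈ kSub Fq C) (hy0 : y ≠ 0) :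
    ∃ z : ℤ, ‖y‖ = (Fintype.card Fq : ℝ) ^ z := by
  have hq2 : 2 ≤ Fintype.card Fq := Fintype.one_lt_card
  have hqne : (Fintype.card Fq : ℝ) ≠ 0 := by positivity
  obtain ⟨r, rfl⟩ := hy
  have hr : r ≠ 0 := by rintro rfl; simp at hy0
  refine ⟨(r.num.natDegree : ℤ) - (r.denom.natDegree : ℤ), ?_⟩
  conv_lhs => rw [← RatFunc.num_div_denom r]
  rw [map_div₀, norm_div]
  rw [show (algebraMap (RatFunc Fq) C) ((algebraMap (Polynomial Fq) (RatFunc Fq)) r.num)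
      = thetaP Fq C r.num from rfl]
  rw [show (algebraMap (RatFunc Fq) C) ((algebraMap (Polynomial Fq) (RatFunc Fq)) r.denom)
      = thetaP Fq C r.denom from rfl]
  rw [aux_norm_thetaP hna hT _ (RatFunc.num_ne_zero hr),
    aux_norm_thetaP hna hT _ r.denom_ne_zero]
  rw [← zpow_natCast (Fintype.card Fq : ℝ), ← zpow_natCast (Fintype.card Fq : ℝ),
    ← zpow_sub₀ hqne]

lemma aux_norm_Kinf (hna : ∀ x y : C, ‖x + y‖ ≤ max ‖x‖ ‖y‖)
    (hT : ‖Tc Fq C‖ = (Fintype.card Fq : ℝ)) {x : C} (hx : x ∈ Kinf Fq C) (hx0 : 0 < ‖x‖) :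
    ∃ z : ℤ, ‖x‖ = (Fintype.card Fq : ℝ) ^ z := by
  have hx' : x ∈ closure (kSub Fq C : Set C) := hx
  obtain ⟨y, hy, hxy⟩ := Metric.mem_closure_iff.mp hx' ‖x‖ hx0
  have h1 : ‖x - y‖ < ‖x‖ := by rwa [← dist_eq_norm]
  have h2 : ‖y‖ = ‖x‖ := by
    have hyx : y = x + -(x - y) := by ring
    rw [hyx, aux_dom_add hna (by rwa [norm_neg])]
  have hy0 : y ≠ 0 := fun h => by rw [h, norm_zero] at h2; exact hx0.ne h2
  obtain ⟨z, hz⟩ := aux_norm_kSub hna hT hy hy0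
  exact ⟨z, by rw [← h2, hz]⟩

end Aux

theorem statement17
    (hna : ∀ x y : C, ‖x + y‖ ≤ max ‖x‖ ‖y‖)
    (hT : ‖Tc Fq C‖ = (Fintype.card Fq : ℝ))
    (Ttil : C) (hTtil : Ttil ^ (Fintype.card Fq - 1) = -Tc Fq C)
    (Res : C → Fq) (hRes : IsRes Fq C Res)
    (x : C) (hx : x ∈ Kinf Fq C) (hx0 : 0 < ‖x‖) (hx1 : ‖x‖ < 1) :
    estar Fq C Res Ttil x ≠ 0 := by
  have hq2 : 2 ≤ Fintype.card Fq := Fintype.one_lt_card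
  have hq1 : (1 : ℝ) < (Fintype.card Fq : ℝ) := by exact_mod_cast hq2
  have hq0 : (0 : ℝ) < (Fintype.card Fq : ℝ) := by linarith
  set q := Fintype.card Fq with hqdef
  -- T and Ttil are nonzero
  have hT0 : Tc Fq C ≠ 0 := by
    intro h
    rw [h, norm_zero] at hT
    linarith
  have hTt : Ttil ≠ 0 := by
    intro h
    rw [h, zero_pow (by omega : q - 1 ≠ 0)] at hTtil
    exact hT0 (by rw [← neg_neg (Tc Fq C), ← hTtil, neg_zero])
  have hc0 : 0 < ‖Ttil⁻¹‖ := norm_pos_iff.mpr (inv_ne_zero hTt)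
  obtain ⟨hadd, hsmul, hker, hres1⟩ := hRes
  -- T ∈ Kinf
  have hTmem : Tc Fq C ∈ Kinf Fq C := by
    apply Subfield.le_topologicalClosure (kSub Fq C)
    exact ⟨algebraMap (Polynomial Fq) (RatFunc Fq) Polynomial.X, rfl⟩
  have hmem : ∀ i : ℕ, Tc Fq C ^ i * x ∈ Kinf Fq C :=
    fun i => mul_mem (pow_mem hTmem i) hx
  -- Existence of an index with nonzero residue
  have hexists : ∃ i : ℕ, Res (Tc Fq C ^ i * x) ≠ 0 := by
    obtain ⟨z, hz⟩ := aux_norm_Kinf hna hT hx hx0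
    have hzneg : z < 0 := by
      by_contra h
      push_neg at h
      have h1 : (1 : ℝ) ≤ (q : ℝ) ^ z := one_le_zpow₀ hq1.le h
      rw [hz] at hx1
      linarith
    set i : ℕ := (-(z + 1)).toNat with hi
    have hiz : (i : ℤ) = -(z + 1) := Int.toNat_of_nonneg (by omega)
    refine ⟨i, fun h0 => ?_⟩
    obtain ⟨a, hA⟩ := (hker _ (hmem i)).mp h0
    have hnorm : ‖Tc Fq C ^ i * x‖ = (q : ℝ) ^ (-1 : ℤ) := by
      rw [norm_mul, norm_pow, hT, hz, ← zpow_natCast (q : ℝ), ← zpow_add₀ (ne_of_gt hq0), hiz]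
      norm_num
    have hsub : ‖Tc Fq C ^ i * x - thetaP Fq C a‖ < (q : ℝ) ^ (-1 : ℤ) :=
      lt_of_le_of_lt hA (zpow_lt_zpow_right₀ hq1 (by norm_num))
    have hθ : ‖thetaP Fq C a‖ = (q : ℝ) ^ (-1 : ℤ) := by
      have hrw : thetaP Fq C a = Tc Fq C ^ i * x + -(Tc Fq C ^ i * x - thetaP Fq C a) := by ring
      rw [hrw, aux_dom_add hna (by rw [norm_neg, hnorm]; exact hsub), hnorm]
    have hlt1 : (q : ℝ) ^ (-1 : ℤ) < 1 := by
      rw [show ((1:ℝ) = (q:ℝ) ^ (0:ℤ)) from (zpow_zero _).symm]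
      exact zpow_lt_zpow_right₀ hq1 (by norm_num)
    rcases eq_or_ne a 0 with rfl | ha
    · rw [map_zero, norm_zero] at hθ
      have := zpow_pos hq0 (-1 : ℤ)
      linarith
    · rw [aux_norm_thetaP hna hT a ha] at hθ
      have h1 : (1 : ℝ) ≤ (q : ℝ) ^ a.natDegree := one_le_pow₀ hq1.le
      linarith
  set i0 := Nat.find hexists with hi0def
  have hres0 : Res (Tc Fq C ^ i0 * x) ≠ 0 := Nat.find_spec hexists
  set F : ℕ → C := fun i => thetaF Fq C (Res (Tc Fq C ^ i * x)) * OmegaNegCoeff Fq C Ttil i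
    with hF
  have hFnorm_le : ∀ i : ℕ,
      ‖F i‖ ≤ ‖Ttil⁻¹‖ * ((q : ℝ) ^ (∑ j ∈ Finset.range i, q ^ j))⁻¹ := by
    intro i
    rw [hF]
    simp only
    rw [norm_mul, aux_omega_norm hna hT]
    have h1 : ‖thetaF Fq C (Res (Tc Fq C ^ i * x))‖ ≤ 1 := aux_norm_thetaF_le _
    have h2 : 0 ≤ ‖Ttil⁻¹‖ * ((q : ℝ) ^ (∑ j ∈ Finset.range i, q ^ j))⁻¹ := by positivity
    calc ‖thetaF Fq C (Res (Tc Fq C ^ i * x))‖ *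
          (‖Ttil⁻¹‖ * ((q : ℝ) ^ (∑ j ∈ Finset.range i, q ^ j))⁻¹)
        ≤ 1 * (‖Ttil⁻¹‖ * ((q : ℝ) ^ (∑ j ∈ Finset.range i, q ^ j))⁻¹) := by
          exact mul_le_mul_of_nonneg_right h1 h2
      _ = _ := one_mul _
  have hSn_ge : ∀ i : ℕ, i ≤ ∑ j ∈ Finset.range i, q ^ j := by
    intro i
    calc i = ∑ _j ∈ Finset.range i, 1 := by simp
      _ ≤ ∑ j ∈ Finset.range i, q ^ j :=
        Finset.sum_le_sum fun j _ => Nat.one_le_pow _ _ (by omega)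
  have hsumm : Summable F := by
    apply aux_summable hna
    rw [Nat.cofinite_eq_atTop]
    have hb : ∀ i : ℕ, ‖F i‖ ≤ ‖Ttil⁻¹‖ * ((q : ℝ)⁻¹) ^ i := by
      intro i
      refine (hFnorm_le i).trans ?_
      rw [inv_pow]
      have h1 : ((q : ℝ) ^ (∑ j ∈ Finset.range i, q ^ j))⁻¹ ≤ ((q : ℝ) ^ i)⁻¹ :=
        inv_anti₀ (by positivity) (aux_pow_le hq1.le (hSn_ge i))
      exact mul_le_mul_of_nonneg_left h1 (norm_nonneg _)
    have hg : Filter.Tendsto (fun i : ℕ => ‖Ttil⁻¹‖ * ((q : ℝ)⁻¹) ^ i)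
        Filter.atTop (nhds 0) := by
      have h2 := (tendsto_pow_atTop_nhds_zero_of_lt_one
        (by positivity : (0:ℝ) ≤ (q:ℝ)⁻¹) (inv_lt_one_of_one_lt₀ hq1)).const_mul ‖Ttil⁻¹‖
      simpa using h2
    exact squeeze_zero_norm hb hg
  have hSn_mono : ∀ {m n : ℕ}, m ≤ n →
      (∑ j ∈ Finset.range m, q ^ j) ≤ ∑ j ∈ Finset.range n, q ^ j :=
    fun h => Finset.sum_le_sum_of_subset (Finset.range_subset_range.mpr h)
  have hFi0 : ‖F i0‖ = ‖Ttil⁻¹‖ * ((q : ℝ) ^ (∑ j ∈ Finset.range i0, q ^ j))⁻¹ := by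
    rw [hF]
    simp only
    rw [norm_mul, aux_norm_thetaF hres0, one_mul, aux_omega_norm hna hT]
  have hSnlt : (∑ j ∈ Finset.range i0, q ^ j) < ∑ j ∈ Finset.range (i0 + 1), q ^ j := by
    rw [Finset.sum_range_succ]
    have : 0 < q ^ i0 := Nat.pow_pos (by omega)
    omega
  have hdom := aux_tsum_dominant hna F hsumm i0
    (‖Ttil⁻¹‖ * ((q : ℝ) ^ (∑ j ∈ Finset.range (i0 + 1), q ^ j))⁻¹) (by positivity)
    (fun i hi => by
      rcases lt_or_gt_of_ne hi with h | h
      · have : Res (Tc Fq C ^ i * x) = 0 := by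
          by_contra hcon
          exact Nat.find_min hexists h hcon
        rw [hF]
        simp only
        rw [this, map_zero, zero_mul, norm_zero]
        positivity
      · refine (hFnorm_le i).trans ?_
        apply mul_le_mul_of_nonneg_left _ (norm_nonneg _)
        apply inv_anti₀ (by positivity)
        exact aux_pow_le hq1.le (hSn_mono h))
    (by
      rw [hFi0]
      apply mul_lt_mul_of_pos_left _ hc0
      apply inv_strictAnti₀ (by positivity)
      exact aux_pow_lt hq1 hSnlt)
  have hnorm_estar : ‖estar Fq C Res Ttil x‖ = ‖F i0‖ := hdom
  intro hcon
  rw [hcon, norm_zero, hFi0] at hnorm_estar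
  have : 0 < ‖Ttil⁻¹‖ * ((q : ℝ) ^ (∑ j ∈ Finset.range i0, q ^ j))⁻¹ := by positivity
  linarith
end
end
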